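/- Suppose θ < 0. Then G' has a negative cycle if and only if there exists a simple path π from y₀ to x₀ in G such that length_G(π) + ω'(e₀) < 0. -/
import Mathlib


namespace DynSPT

variable {V : Type*}

/-- The list of consecutive edges of a path given as a list of vertices. -/
def edgeList (l : List V) : List (V × V) := l.zip l.tail

/-- The length of a path with respect to the weight function `ω`. -/
def len (ω : V → V → ℝ) (l : List V) : ℝ :=
  ((edgeList l).map fun p => ω p.1 p.2).sum

/-- `l` is a path in the directed graph with edge relation `E`. -/
def IsWalk (E : V → V → Prop) (l : List V) : Prop := l ≠ [] ∧ l.Chain' E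

/-- `l` is a path from `u` to `v` in the directed graph with edge relation `E`. -/
def IsWalkFrom (E : V → V → Prop) (l : List V) (u v : V) : Prop :=
  IsWalk E l ∧ l.head? = some u ∧ l.getLast? = some v

/-- The path `l` traverses the edge `e`. -/
def Traverses (l : List V) (e : V × V) : Prop := e ∈ edgeList l

/-- `l` is a cycle: a path with at least one edge whose first and last vertices agree. -/
def IsCycle (E : V → V → Prop) (l : List V) : Prop :=
  ∃ v, IsWalkFrom E l v v ∧ 2 ≤ l.length

/-- The weighted directed graph `(E, ω)` has a negative cycle. -/
def HasNegCycle (E : V → V → Prop) (ω : V → V → ℝ) : Prop :=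
  ∃ l, IsCycle E l ∧ len ω l < 0

/-- The weighted directed graph `(E, ω)` has a zero-length cycle. -/
def HasZeroCycle (E : V → V → Prop) (ω : V → V → ℝ) : Prop :=
  ∃ l, IsCycle E l ∧ len ω l = 0

/-- The distance from `s` to `v`: the infimum of the lengths of paths from `s` to `v`. -/
noncomputable def dist (E : V → V → Prop) (ω : V → V → ℝ) (s v : V) : ℝ :=
  sInf {L : ℝ | ∃ l, IsWalkFrom E l s v ∧ len ω l = L}

/-- A spanning tree of the directed graph `E` rooted at `s`, recorded by the parent
function together with, for every vertex `v`, the tree path from `s` to `v`. -/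
structure RootedTree (E : V → V → Prop) (s : V) where
  parent : V → V
  path : V → List V
  path_root : path s = [s]
  parent_edge : ∀ v, v ≠ s → E (parent v) v
  path_eq : ∀ v, v ≠ s → path v = path (parent v) ++ [v]
  path_isWalkFrom : ∀ v, IsWalkFrom E (path v) s v

/-- `(a, b)` is an edge of the rooted tree `T`. -/
def RootedTree.IsEdge {E : V → V → Prop} {s : V} (T : RootedTree E s) (a b : V) : Prop :=
  b ≠ s ∧ T.parent b = a

/-- `T` is a shortest-path tree for the weight function `ω`:
every tree path from the root is a shortest path. -/
def IsSPT {E : V → V → Prop} {s : V} (ω : V → V → ℝ) (T : RootedTree E s) : Prop :=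
  ∀ v, len ω (T.path v) = dist E ω s v

lemma edgeList_nil : edgeList ([] : List V) = [] := rfl
lemma edgeList_single (a : V) : edgeList [a] = [] := rfl
lemma edgeList_cons_cons (a b : V) (l : List V) :
    edgeList (a :: b :: l) = (a, b) :: edgeList (b :: l) := rfl

lemma len_nil (ω : V → V → ℝ) : len ω ([] : List V) = 0 := rfl
lemma len_single (ω : V → V → ℝ) (a : V) : len ω [a] = 0 := rfl
lemma len_cons_cons (ω : V → V → ℝ) (a b : V) (l : List V) :
    len ω (a :: b :: l) = ω a b + len ω (b :: l) := by
  simp [len, edgeList_cons_cons]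

lemma edgeList_split (A : List V) (a : V) (B : List V) :
    edgeList (A ++ a :: B) = edgeList (A ++ [a]) ++ edgeList (a :: B) := by
  induction A with
  | nil => simp [edgeList_single]
  | cons x A ih =>
    cases A with
    | nil => simp [edgeList_cons_cons, edgeList_single]
    | cons y A' =>
      simp only [List.cons_append, edgeList_cons_cons] at *
      rw [ih]

lemma len_split (ω : V → V → ℝ) (A : List V) (a : V) (B : List V) :
    len ω (A ++ a :: B) = len ω (A ++ [a]) + len ω (a :: B) := by
  unfold len
  rw [edgeList_split, List.map_append, List.sum_append]

lemma edgeList_join {A : List V} {a : V} (h : A.getLast? = some a) (t : List V) :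
    edgeList (A ++ t) = edgeList A ++ edgeList (a :: t) := by
  obtain ⟨A', rfl⟩ : ∃ A', A = A' ++ [a] :=
    ⟨A.dropLast, (List.dropLast_append_getLast? a h).symm⟩
  rw [List.append_assoc, List.singleton_append, edgeList_split]

lemma len_join (ω : V → V → ℝ) {A : List V} {a : V} (h : A.getLast? = some a) (t : List V) :
    len ω (A ++ t) = len ω A + len ω (a :: t) := by
  simp [len, edgeList_join h]

lemma len_congr {ω ω' : V → V → ℝ} {l : List V}
    (h : ∀ e ∈ edgeList l, ω' e.1 e.2 = ω e.1 e.2) : len ω' l = len ω l := by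
  unfold len
  congr 1
  exact List.map_congr_left h

lemma mem_edgeList {a b : V} : ∀ {l : List V}, (a, b) ∈ edgeList l →
    ∃ A B, l = A ++ a :: b :: B := by
  intro l
  induction l with
  | nil => simp [edgeList_nil]
  | cons x t ih =>
    cases t with
    | nil => simp [edgeList_single]
    | cons y t' =>
      rw [edgeList_cons_cons]
      intro h
      rcases List.mem_cons.mp h with h | h
      · obtain ⟨rfl, rfl⟩ : x = a ∧ y = b := by
          simpa [Prod.ext_iff] using h.symm
        exact ⟨[], t', rfl⟩
      · obtain ⟨A, B, hAB⟩ := ih h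
        exact ⟨x :: A, B, by rw [List.cons_append, hAB]⟩

lemma notMem_edgeList_of_last {x : V} : ∀ {l : List V}, l.Nodup → l.getLast? = some x →
    ∀ b, (x, b) ∉ edgeList l := by
  intro l
  induction l with
  | nil => simp [edgeList_nil]
  | cons a t ih =>
    intro hnd hl b
    cases t with
    | nil => simp [edgeList_single]
    | cons y t' =>
      rw [edgeList_cons_cons]
      intro h
      have hlt : (y :: t').getLast? = some x := by
        rw [List.getLast?_cons_cons] at hl; exact hl
      rcases List.mem_cons.mp h with h | h
      · have hax : a = x := ((Prod.ext_iff.mp h).1).symm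
        have hx : x ∈ y :: t' := by
          obtain ⟨hne, heq⟩ := List.mem_getLast?_eq_getLast hlt
          exact heq ▸ List.getLast_mem hne
        exact (List.nodup_cons.mp hnd).1 (hax ▸ hx)
      · exact ih (List.nodup_cons.mp hnd).2 hlt b h

lemma walk_split {E : V → V → Prop} {A : List V} {a u v : V} {B : List V}
    (h : IsWalkFrom E (A ++ a :: B) u v) :
    IsWalkFrom E (A ++ [a]) u a ∧ IsWalkFrom E (a :: B) a v := by
  obtain ⟨⟨hne, hch⟩, hh, hl⟩ := h
  have hch' : (A ++ [a]).Chain' E ∧ List.Chain' E B ∧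
      ∀ x ∈ (A ++ [a]).getLast?, ∀ y ∈ B.head?, E x y := by
    rw [show A ++ a :: B = (A ++ [a]) ++ B by simp] at hch
    exact List.isChain_append.mp hch
  have hlastA : (A ++ [a]).getLast? = some a := by simp
  refine ⟨⟨⟨by simp, hch'.1⟩, ?_, hlastA⟩, ⟨⟨by simp, ?_⟩, rfl, ?_⟩⟩
  · rw [← hh]; cases A <;> simp
  · exact List.isChain_cons.mpr ⟨fun y hy => hch'.2.2 a hlastA y hy, hch'.2.1⟩
  · rw [← hl]
    cases B with
    | nil => simp
    | cons b B' => rw [List.getLast?_append_cons, List.getLast?_cons_cons]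

lemma walk_join {E : V → V → Prop} {P t : List V} {u w v : V}
    (h1 : IsWalkFrom E P u w) (h2 : IsWalkFrom E (w :: t) w v) :
    IsWalkFrom E (P ++ t) u v := by
  obtain ⟨⟨hne1, hch1⟩, hh1, hl1⟩ := h1
  obtain ⟨⟨hne2, hch2⟩, hh2, hl2⟩ := h2
  refine ⟨⟨by simp [hne1], ?_⟩, ?_, ?_⟩
  · refine List.isChain_append.mpr ⟨hch1, (List.isChain_cons.mp hch2).2, ?_⟩
    intro x hx y hy
    rw [hl1] at hx
    simp only [Option.mem_def, Option.some_inj] at hx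
    subst hx
    exact (List.isChain_cons.mp hch2).1 y hy
  · rw [← hh1]; cases P with
    | nil => simp at hh1
    | cons p P' => simp
  · cases t with
    | nil => simpa using hl1.trans (by simpa using hl2)
    | cons b t' =>
      rw [List.getLast?_append_of_ne_nil _ (by simp), ← hl2, List.getLast?_cons_cons]

lemma exists_dup : ∀ (l : List V), ¬ l.Nodup →
    ∃ (A : List V) (w : V) (B C : List V), l = A ++ w :: (B ++ w :: C) := by
  intro l
  induction l with
  | nil => simp
  | cons x t ih =>
    intro h
    by_cases hx : x ∈ t
    · obtain ⟨B, C, rfl⟩ := List.append_of_mem hx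
      exact ⟨[], x, B, C, rfl⟩
    · have ht : ¬ t.Nodup := by simpa [List.nodup_cons, hx] using h
      obtain ⟨A, w, B, C, rfl⟩ := ih ht
      exact ⟨x :: A, w, B, C, rfl⟩

lemma exists_nodup_walk (E : V → V → Prop) (ω : V → V → ℝ) (hG : ¬ HasNegCycle E ω) :
    ∀ (n : ℕ) (l : List V) (u v : V), l.length ≤ n → IsWalkFrom E l u v →
      ∃ l', IsWalkFrom E l' u v ∧ l'.Nodup ∧ len ω l' ≤ len ω l := by
  intro n
  induction n with
  | zero =>
    intro l u v hlen hw
    have : l = [] := List.length_eq_zero_iff.mp (Nat.le_zero.mp hlen)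
    subst this
    simp [IsWalkFrom, IsWalk] at hw
  | succ n ih =>
    intro l u v hlen hw
    by_cases hnd : l.Nodup
    · exact ⟨l, hw, hnd, le_refl _⟩
    · obtain ⟨A, w, B, C, rfl⟩ := exists_dup l hnd
      have h1 := walk_split hw
      have h2 : IsWalkFrom E ((w :: B) ++ w :: C) w v := by
        have := h1.2
        rwa [show w :: (B ++ w :: C) = (w :: B) ++ w :: C by simp] at this
      have h3 := walk_split h2
      have hcyc : 0 ≤ len ω ((w :: B) ++ [w]) := by
        by_contra hlt
        push_neg at hlt
        exact hG ⟨(w :: B) ++ [w], ⟨w, h3.1, by simp⟩, hlt⟩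
      have hwalk : IsWalkFrom E ((A ++ [w]) ++ C) u v := walk_join h1.1 h3.2
      have hlen' : ((A ++ [w]) ++ C).length ≤ n := by
        simp only [List.length_append, List.length_cons, List.length_nil] at hlen ⊢
        omega
      obtain ⟨l', hl', hnd', hle⟩ := ih _ u v hlen' hwalk
      refine ⟨l', hl', hnd', hle.trans ?_⟩
      have e1 : len ω (A ++ w :: (B ++ w :: C)) =
          len ω (A ++ [w]) + len ω (w :: (B ++ w :: C)) := len_split ω A w _
      have e2 : len ω (w :: (B ++ w :: C)) =
          len ω ((w :: B) ++ [w]) + len ω (w :: C) := by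
        rw [show w :: (B ++ w :: C) = (w :: B) ++ w :: C by simp]
        exact len_split ω (w :: B) w C
      have e3 : len ω ((A ++ [w]) ++ C) = len ω (A ++ [w]) + len ω (w :: C) := by
        rw [List.append_assoc, List.singleton_append]
        exact len_split ω A w C
      linarith

lemma walk_lb (E : V → V → Prop) (ω ω' : V → V → ℝ) (x₀ y₀ : V)
    (hω' : ∀ a b, (a, b) ≠ (x₀, y₀) → ω' a b = ω a b)
    (H : ∀ π, IsWalkFrom E π y₀ x₀ → 0 ≤ len ω π + ω' x₀ y₀) :
    ∀ (n : ℕ) (π : List V), π.length ≤ n → IsWalkFrom E π y₀ x₀ →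
      0 ≤ len ω' π + ω' x₀ y₀ := by
  intro n
  induction n with
  | zero =>
    intro π hlen hπ
    have : π = [] := List.length_eq_zero_iff.mp (Nat.le_zero.mp hlen)
    subst this
    simp [IsWalkFrom, IsWalk] at hπ
  | succ n ih =>
    intro π hlen hπ
    by_cases htr : (x₀, y₀) ∈ edgeList π
    · obtain ⟨A, B, rfl⟩ := mem_edgeList htr
      have h1 := walk_split hπ
      have h2 : IsWalkFrom E ([x₀] ++ y₀ :: B) x₀ x₀ := h1.2
      have h3 := walk_split h2
      have i1 : 0 ≤ len ω' (A ++ [x₀]) + ω' x₀ y₀ := by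
        refine ih _ ?_ h1.1
        simp only [List.length_append, List.length_cons, List.length_nil] at hlen ⊢
        omega
      have i2 : 0 ≤ len ω' (y₀ :: B) + ω' x₀ y₀ := by
        refine ih _ ?_ h3.2
        simp only [List.length_append, List.length_cons, List.length_nil] at hlen ⊢
        omega
      have e1 : len ω' (A ++ x₀ :: y₀ :: B) =
          len ω' (A ++ [x₀]) + len ω' (x₀ :: y₀ :: B) := len_split ω' A x₀ _
      have e2 := len_cons_cons ω' x₀ y₀ B
      linarith
    · have heq : len ω' π = len ω π := by
        refine len_congr fun e he => hω' e.1 e.2 fun h => htr ?_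
        rwa [← h]
      rw [heq]
      exact H π hπ

theorem statement_12
    {V : Type*} [Fintype V] (E : V → V → Prop) (ω ω' : V → V → ℝ) (s x₀ y₀ : V)
    (hE₀ : E x₀ y₀)
    (hreach : ∀ v, ∃ l, IsWalkFrom E l s v)
    (hω' : ∀ a b, (a, b) ≠ (x₀, y₀) → ω' a b = ω a b)
    (hG : ¬ HasNegCycle E ω)
    (hθ : ω' x₀ y₀ - ω x₀ y₀ < 0) :
    HasNegCycle E ω' ↔
      ∃ l, IsWalkFrom E l y₀ x₀ ∧ l.Nodup ∧ len ω l + ω' x₀ y₀ < 0 := by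
  constructor
  · rintro ⟨c, ⟨w, hcw, hlen2⟩, hneg⟩
    by_contra hno
    push_neg at hno
    have H : ∀ π, IsWalkFrom E π y₀ x₀ → 0 ≤ len ω π + ω' x₀ y₀ := by
      intro π hπ
      obtain ⟨ρ, hρ, hρnd, hle⟩ := exists_nodup_walk E ω hG π.length π y₀ x₀ le_rfl hπ
      have := hno ρ hρ hρnd
      linarith
    have W := walk_lb E ω ω' x₀ y₀ hω' H
    by_cases htr : (x₀, y₀) ∈ edgeList c
    · obtain ⟨A, B, rfl⟩ := mem_edgeList htr
      have h1 := walk_split hcw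
      have h2 : IsWalkFrom E ([x₀] ++ y₀ :: B) x₀ w := h1.2
      have h3 := walk_split h2
      obtain ⟨t, ht⟩ : ∃ t, A ++ [x₀] = w :: t := by
        have hh := h1.1.2.1
        cases hA : A ++ [x₀] with
        | nil => simp at hA
        | cons a t =>
          rw [hA] at hh
          simp only [List.head?_cons, Option.some_inj] at hh
          exact ⟨t, by rw [hh]⟩
      have hwt : IsWalkFrom E (w :: t) w x₀ := ht ▸ h1.1
      have hρ : IsWalkFrom E ((y₀ :: B) ++ t) y₀ x₀ := walk_join h3.2 hwt
      have hW := W ((y₀ :: B) ++ t).length _ le_rfl hρ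
      have e1 : len ω' (A ++ x₀ :: y₀ :: B) =
          len ω' (A ++ [x₀]) + len ω' (x₀ :: y₀ :: B) := len_split ω' A x₀ _
      have e2 := len_cons_cons ω' x₀ y₀ B
      have e3 : len ω' ((y₀ :: B) ++ t) = len ω' (y₀ :: B) + len ω' (w :: t) :=
        len_join ω' h3.2.2.2 t
      have e4 : len ω' (w :: t) = len ω' (A ++ [x₀]) := by rw [ht]
      linarith
    · apply hG
      refine ⟨c, ⟨w, hcw, hlen2⟩, ?_⟩
      have heq : len ω' c = len ω c := by
        refine len_congr fun e he => hω' e.1 e.2 fun h => htr ?_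
        rwa [← h]
      rw [← heq]
      exact hneg
  · rintro ⟨l, hl, hnd, hlt⟩
    obtain ⟨⟨hlne, hlch⟩, hlh, hll⟩ := hl
    refine ⟨l ++ [y₀], ⟨y₀, ⟨⟨by simp, ?_⟩, ?_, by simp⟩, ?_⟩, ?_⟩
    · refine List.isChain_append.mpr ⟨hlch, List.isChain_singleton y₀, ?_⟩
      intro x hx y hy
      rw [hll] at hx
      simp only [Option.mem_def, Option.some_inj, List.head?_cons] at hx hy
      subst hx; subst hy
      exact hE₀
    · cases l with
      | nil => simp at hlh
      | cons a l' =>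
        simp only [List.head?_cons, Option.some_inj] at hlh
        simp [hlh]
    · cases l with
      | nil => simp at hlh
      | cons a l' => simp
    · have e1 : len ω' (l ++ [y₀]) = len ω' l + len ω' [x₀, y₀] := len_join ω' hll [y₀]
      have e2 : len ω' [x₀, y₀] = ω' x₀ y₀ := by
        rw [len_cons_cons, len_single]; ring
      have e3 : len ω' l = len ω l := by
        refine len_congr fun e he => hω' e.1 e.2 fun h => ?_
        exact notMem_edgeList_of_last hnd hll y₀ (by rwa [← h])
      rw [e1, e2, e3]
      exact hlt

end DynSPT
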